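/- Let M = ⟨S, A, T, s0⟩ be an nrMDP, λ : A × S → Z a labeling function, R = ⟨U, u0, Z, δ_u, δ_r, c⟩ a Mealy reward machine, and P = M ⊗_λ R their synchronized product. For every strategy π for M and the corresponding strategy π⊗ for P (defined by π⊗(B(σh)) = π(σh) for every history σh of M), the expected mean payoffs coincide: E^{M,π}_{s0}(MP(R)) = E^{P,π⊗}_{(s0,u0)}(MP(R⊗)), where on the left the mean payoff is taken of the reward trace δ*_r(u0, ·) of the infinite history of M and on the right of the immediate rewards R⊗ collected along the infinite history of P. -/

import Mathlib

open MeasureTheory Filter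

attribute [local instance] Classical.propDecidable

/-- A non-rewarding Markov decision process over finite state set `S` and
finite action set `A`. -/
structure NRMDP (S A : Type) [Fintype S] [Fintype A] where
  T : S → A → S → ℝ
  T_nonneg : ∀ s a s', 0 ≤ T s a s'
  T_le_one : ∀ s a s', T s a s' ≤ 1
  T_sum_one : ∀ s a, ∑ s', T s a s' = 1
  s0 : S

/-- A Mealy reward machine over the finite observation set `Z` with
distinguished observation `null`. -/
structure MRM (U Z : Type) [Fintype U] [Fintype Z] (null : Z) where
  u0 : U
  δu : U → Z → U
  δr : U → Z → ℝ
  c : ℝ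
  δu_null : ∀ u, δu u null = u
  δr_null : ∀ u, δr u null = c

variable {S A U Z St Ac : Type}

/-- `ValidFrom T s steps` : the alternating sequence starting at `s` whose
successive (action, next-state) steps are `steps` has positive transition
probability at every step. -/
def ValidFrom (T : St → Ac → St → ℝ) : St → List (Ac × St) → Prop
  | _, [] => True
  | s, step :: rest => 0 < T s step.1 step.2 ∧ ValidFrom T step.2 rest

/-- Transition function of the synchronized product `M ⊗_λ R`. -/
noncomputable def prodT (T : S → A → S → ℝ) (lab : A → S → Z) (δu : U → Z → U) :
    S × U → A → S × U → ℝ :=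
  fun p a q => if q.2 = δu p.2 (lab a q.1) then T p.1 a q.1 else 0

/-- The map `B` (on the step list of a history), lifting a history of `M`
to a history of the synchronized product by tracking the MRM node. -/
def liftHist (lab : A → S → Z) (δu : U → Z → U) : U → List (A × S) → List (A × (S × U))
  | _, [] => []
  | u, (a, s') :: rest =>
      (a, (s', δu u (lab a s'))) :: liftHist lab δu (δu u (lab a s')) rest

/-- Every trajectory space `ℕ → X` over a (finite) state or step space `X`
carries the product of the discrete σ-algebras. -/
instance trajMeasurableSpace (X : Type) : MeasurableSpace (ℕ → X) :=
  @MeasurableSpace.pi ℕ (fun _ => X) (fun _ => ⊤)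

/-- The cylinder of infinite trajectories extending the finite prefix `pre`. -/
def Cyl {X : Type} (pre : List X) : Set (ℕ → X) :=
  {ω | ∀ i : ℕ, i < pre.length → pre[i]? = some (ω i)}

/-- Auxiliary function: probability of a finite step sequence, given the
current state, the history so far (fed to the strategy) and the remaining
steps. -/
noncomputable def prefixProbAux (T : St → Ac → St → ℝ) (π : List (Ac × St) → Ac) :
    St → List (Ac × St) → List (Ac × St) → ℝ
  | _, _, [] => 1
  | s, past, (a, s') :: rest =>
      (if a = π past then T s a s' else 0) *
        prefixProbAux T π s' (past ++ [(a, s')]) rest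

/-- Probability, under strategy `π` from state `s0`, of the finite step
sequence `h`. -/
noncomputable def prefixProb (T : St → Ac → St → ℝ) (π : List (Ac × St) → Ac)
    (s0 : St) (h : List (Ac × St)) : ℝ :=
  prefixProbAux T π s0 [] h

/-- `IsInduced T π s0 μ` : `μ` is the probability measure on infinite
histories induced (via the Ionescu–Tulcea theorem) by playing strategy `π`
from `s0` in the MDP with transition function `T`; it is characterized by
its values on cylinders. -/
def IsInduced (T : St → Ac → St → ℝ) (π : List (Ac × St) → Ac) (s0 : St)
    (μ : MeasureTheory.Measure (ℕ → Ac × St)) : Prop :=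
  MeasureTheory.IsProbabilityMeasure μ ∧
    ∀ h : List (Ac × St), μ (Cyl h) = ENNReal.ofReal (prefixProb T π s0 h)

/-- The MRM node reached after `i` steps of the infinite history `ω`. -/
def nodeAt (lab : A → S → Z) (δu : U → Z → U) (u0 : U) (ω : ℕ → A × S) : ℕ → U
  | 0 => u0
  | i + 1 => δu (nodeAt lab δu u0 ω i) (lab (ω i).1 (ω i).2)

/-- The reward trace (under the MRM) of the infinite history `ω` of `M`. -/
noncomputable def rewAt (lab : A → S → Z) (δu : U → Z → U) (δr : U → Z → ℝ)
    (u0 : U) (ω : ℕ → A × S) (i : ℕ) : ℝ :=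
  δr (nodeAt lab δu u0 ω i) (lab (ω i).1 (ω i).2)

/-- The mean payoff `limsup_k (1/k) ∑_{i=1}^k r_i` of an infinite reward
sequence. -/
noncomputable def meanPayoff (r : ℕ → ℝ) : ℝ :=
  Filter.limsup (fun k : ℕ => (∑ i ∈ Finset.range k, r i) / k) Filter.atTop

/-- The product-MDP state occupied before step `i` along an infinite history
of the synchronized product (only its MRM-node component is recorded). -/
def prodNodeAt (u0 : U) (ω : ℕ → A × (S × U)) : ℕ → U
  | 0 => u0
  | i + 1 => (ω i).2.2

/-- The immediate rewards `R⊗` collected along an infinite history of the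
synchronized product. -/
noncomputable def prodRewAt (lab : A → S → Z) (δr : U → Z → ℝ) (u0 : U)
    (ω : ℕ → A × (S × U)) (i : ℕ) : ℝ :=
  δr (prodNodeAt u0 ω i) (lab (ω i).1 (ω i).2.1)


section AuxProof

lemma eval_measurable_top {X : Type} (i : ℕ) :
    @Measurable (ℕ → X) X (trajMeasurableSpace X) ⊤ (fun ω => ω i) :=
  @measurable_pi_apply ℕ (fun _ => X) (fun _ => ⊤) i

lemma measurable_comp2_top {Ω β γ ε : Type} [MeasurableSpace Ω] [Countable β] [Countable γ]
    {f : Ω → β} {g : Ω → γ}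
    (hf : @Measurable Ω β _ ⊤ f) (hg : @Measurable Ω γ _ ⊤ g) (k : β → γ → ε) :
    @Measurable Ω ε _ ⊤ (fun ω => k (f ω) (g ω)) := by
  intro B _
  have hB : (fun ω => k (f ω) (g ω)) ⁻¹' B
      = ⋃ (b : β) (c : γ) (_ : k b c ∈ B), f ⁻¹' {b} ∩ g ⁻¹' {c} := by
    ext ω
    simp only [Set.mem_preimage, Set.mem_iUnion, Set.mem_inter_iff, Set.mem_singleton_iff]
    constructor
    · intro h; exact ⟨f ω, g ω, h, rfl, rfl⟩
    · rintro ⟨b, c, h, rfl, rfl⟩; exact h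
  rw [hB]
  exact MeasurableSet.iUnion fun b => MeasurableSet.iUnion fun c =>
    MeasurableSet.iUnion fun _ => (hf trivial).inter (hg trivial)

lemma measurable_of_top_cod {Ω ε : Type} [MeasurableSpace Ω] [MeasurableSpace ε] {g : Ω → ε}
    (hg : @Measurable Ω ε _ ⊤ g) : Measurable g :=
  hg.mono le_rfl le_top

lemma measurableSet_Cyl {X : Type} (h : List X) : MeasurableSet (Cyl h) := by
  have he : Cyl (X := X) h
      = ⋂ i ∈ Finset.range h.length, (fun ω : ℕ → X => ω i) ⁻¹' {x | h[i]? = some x} := by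
    ext ω; simp [Cyl]
  rw [he]
  exact Set.Finite.measurableSet_biInter (Finset.range h.length).finite_toSet
    (fun i _ => eval_measurable_top i trivial)

lemma isPiSystem_Cyl {X : Type} : IsPiSystem {C : Set (ℕ → X) | ∃ h : List X, C = Cyl h} := by
  have key : ∀ h1 h2 : List X, h1.length ≤ h2.length →
      (∀ j, j < h1.length → h1[j]? = h2[j]?) → Cyl h2 ⊆ Cyl h1 := by
    intro h1 h2 hle hagree ω hω j hj
    rw [hagree j hj]
    exact hω j (lt_of_lt_of_le hj hle)
  rintro C1 ⟨h1, rfl⟩ C2 ⟨h2, rfl⟩ ⟨ω, hω1, hω2⟩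
  have hagree : ∀ j, j < h1.length → j < h2.length → h1[j]? = h2[j]? := by
    intro j hj1 hj2; rw [hω1 j hj1, hω2 j hj2]
  rcases le_total h1.length h2.length with hle | hle
  · refine ⟨h2, ?_⟩
    rw [Set.inter_eq_right.2 (key h1 h2 hle (fun j hj => hagree j hj (lt_of_lt_of_le hj hle)))]
  · refine ⟨h1, ?_⟩
    rw [Set.inter_eq_left.2 (key h2 h1 hle
      (fun j hj => (hagree j (lt_of_lt_of_le hj hle) hj).symm))]

lemma generateFrom_Cyl {X : Type} [Countable X] :
    trajMeasurableSpace X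
      = MeasurableSpace.generateFrom {C : Set (ℕ → X) | ∃ h : List X, C = Cyl h} := by
  apply le_antisymm
  · refine iSup_le fun i => ?_
    intro s hs
    obtain ⟨t, -, rfl⟩ := hs
    have h1 : ∀ x : X, MeasurableSet[MeasurableSpace.generateFrom
        {C : Set (ℕ → X) | ∃ h : List X, C = Cyl h}] ((fun ω : ℕ → X => ω i) ⁻¹' {x}) := by
      intro x
      have he : (fun ω : ℕ → X => ω i) ⁻¹' {x}
          = ⋃ (f : Fin (i+1) → X) (_ : f ⟨i, Nat.lt_succ_self i⟩ = x), Cyl (List.ofFn f) := by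
        ext ω
        simp only [Set.mem_preimage, Set.mem_singleton_iff, Set.mem_iUnion]
        constructor
        · intro hx
          refine ⟨fun j => ω j, hx, ?_⟩
          intro j hj
          rw [List.getElem?_ofFn]
          simp only [List.length_ofFn] at hj
          simp [List.ofFnNthVal, hj]
        · rintro ⟨f, hfx, hf⟩
          have := hf i (by simp)
          rw [List.getElem?_ofFn] at this
          simp [List.ofFnNthVal, Nat.lt_succ_self i] at this
          rw [← this, hfx]
      rw [he]
      exact MeasurableSet.iUnion fun f => MeasurableSet.iUnion fun _ =>
        MeasurableSpace.measurableSet_generateFrom ⟨_, rfl⟩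
    have he2 : (fun ω : ℕ → X => ω i) ⁻¹' t
        = ⋃ (x : X) (_ : x ∈ t), (fun ω : ℕ → X => ω i) ⁻¹' {x} := by
      ext ω; simp
    rw [he2]
    exact MeasurableSet.iUnion fun x => MeasurableSet.iUnion fun _ => h1 x
  · refine MeasurableSpace.generateFrom_le ?_
    rintro _ ⟨h, rfl⟩
    exact measurableSet_Cyl h

/-- Strip the MRM-node component from a product history. -/
def strip : List (A × (S × U)) → List (A × S) :=
  List.map (fun p => (p.1, p.2.1))

/-- The MRM node reached after consuming a finite step list. -/
def nodeFold (lab : A → S → Z) (δu : U → Z → U) (u : U) (h : List (A × S)) : U :=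
  h.foldl (fun v p => δu v (lab p.1 p.2)) u

lemma liftHist_length (lab : A → S → Z) (δu : U → Z → U) :
    ∀ (h : List (A × S)) (u : U), (liftHist lab δu u h).length = h.length
  | [], _ => rfl
  | (a, s') :: t, u => by
      simp [liftHist, liftHist_length lab δu t]

lemma strip_liftHist (lab : A → S → Z) (δu : U → Z → U) :
    ∀ (h : List (A × S)) (u : U), strip (liftHist lab δu u h) = h
  | [], _ => rfl
  | (a, s') :: t, u => by
      simpa [liftHist, strip] using strip_liftHist lab δu t (δu u (lab a s'))

lemma nodeFold_take_succ (lab : A → S → Z) (δu : U → Z → U) (u : U) (h : List (A × S))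
    (i : ℕ) (p : A × S) (hp : h[i]? = some p) :
    nodeFold lab δu u (h.take (i + 1)) = δu (nodeFold lab δu u (h.take i)) (lab p.1 p.2) := by
  rw [List.take_succ, hp]
  simp [nodeFold, List.foldl_append]

lemma liftHist_getElem? (lab : A → S → Z) (δu : U → Z → U) :
    ∀ (h : List (A × S)) (u : U) (i : ℕ),
      (liftHist lab δu u h)[i]?
        = (h[i]?).map (fun p => (p.1, (p.2, nodeFold lab δu u (h.take (i + 1)))))
  | [], _, _ => by simp [liftHist]
  | (a, s') :: t, u, 0 => by
      simp [liftHist, nodeFold]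
  | (a, s') :: t, u, i + 1 => by
      have := liftHist_getElem? lab δu t (δu u (lab a s')) i
      simp only [liftHist, List.getElem?_cons_succ, this]
      have : ((a, s') :: t).take (i + 1 + 1) = (a, s') :: t.take (i + 1) := rfl
      rw [this]
      rfl

lemma nodeAt_eq_nodeFold (lab : A → S → Z) (δu : U → Z → U) (u0 : U) (ω : ℕ → A × S)
    (h : List (A × S)) :
    ∀ i : ℕ, (∀ j, j < i → h[j]? = some (ω j)) →
      nodeAt lab δu u0 ω i = nodeFold lab δu u0 (h.take i)
  | 0, _ => rfl
  | i + 1, hyp => by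
      have hi : h[i]? = some (ω i) := hyp i (Nat.lt_succ_self i)
      rw [nodeFold_take_succ lab δu u0 h i _ hi]
      have := nodeAt_eq_nodeFold lab δu u0 ω h i (fun j hj => hyp j (Nat.lt_succ_of_lt hj))
      simp [nodeAt, this]

/-- The lift of an infinite history of `M` to an infinite history of the product. -/
def liftTraj (lab : A → S → Z) (δu : U → Z → U) (u0 : U) (ω : ℕ → A × S) :
    ℕ → A × (S × U) :=
  fun i => ((ω i).1, ((ω i).2, nodeAt lab δu u0 ω (i + 1)))

lemma mem_Cyl_liftHist_iff (lab : A → S → Z) (δu : U → Z → U) (u0 : U)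
    (h : List (A × S)) (ω : ℕ → A × S) :
    liftTraj lab δu u0 ω ∈ Cyl (liftHist lab δu u0 h) ↔ ω ∈ Cyl h := by
  constructor
  · intro hmem i hi
    have hi' : i < (liftHist lab δu u0 h).length := by
      rwa [liftHist_length]
    have := hmem i hi'
    rw [liftHist_getElem? lab δu h u0 i] at this
    rcases hx : h[i]? with _ | p
    · rw [hx] at this; simp at this
    · rw [hx] at this
      simp only [Option.map_some] at this
      have h1 : p.1 = (ω i).1 := congrArg (fun q => q.1) (Option.some.inj this)
      have h2 : p.2 = (ω i).2 := congrArg (fun q => q.2.1) (Option.some.inj this)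
      exact congrArg some (Prod.ext h1 h2)
  · intro hmem i hi
    rw [liftHist_length] at hi
    rw [liftHist_getElem? lab δu h u0 i, hmem i hi]
    simp only [Option.map_some]
    have : nodeAt lab δu u0 ω (i + 1) = nodeFold lab δu u0 (h.take (i + 1)) :=
      nodeAt_eq_nodeFold lab δu u0 ω h (i + 1)
        (fun j hj => hmem j (lt_of_lt_of_le hj hi))
    simp [liftTraj, this]

lemma liftTraj_preimage_Cyl_lift (lab : A → S → Z) (δu : U → Z → U) (u0 : U)
    (h : List (A × S)) :
    liftTraj lab δu u0 ⁻¹' Cyl (liftHist lab δu u0 h) = Cyl h := by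
  ext ω
  exact mem_Cyl_liftHist_iff lab δu u0 h ω

lemma liftTraj_preimage_Cyl_ne (lab : A → S → Z) (δu : U → Z → U) (u0 : U)
    (hP : List (A × (S × U))) (hne : hP ≠ liftHist lab δu u0 (strip hP)) :
    liftTraj lab δu u0 ⁻¹' Cyl hP = ∅ := by
  rw [Set.eq_empty_iff_forall_notMem]
  intro ω hω
  apply hne
  have hlen : (strip hP).length = hP.length := List.length_map _
  have hsmem : ω ∈ Cyl (strip hP) := by
    intro i hi
    rw [hlen] at hi
    have := hω i hi
    unfold strip
    rw [List.getElem?_map, this]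
    rfl
  have hmem2 : liftTraj lab δu u0 ω ∈ Cyl (liftHist lab δu u0 (strip hP)) :=
    (mem_Cyl_liftHist_iff lab δu u0 (strip hP) ω).2 hsmem
  apply List.ext_getElem?
  intro i
  by_cases hi : i < hP.length
  · rw [hω i hi, hmem2 i (by rwa [liftHist_length, hlen])]
  · rw [List.getElem?_eq_none (by omega), List.getElem?_eq_none]
    rw [liftHist_length, hlen]; omega

lemma prodNodeAt_liftTraj (lab : A → S → Z) (δu : U → Z → U) (u0 : U) (ω : ℕ → A × S) :
    ∀ i, prodNodeAt u0 (liftTraj lab δu u0 ω) i = nodeAt lab δu u0 ω i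
  | 0 => rfl
  | _ + 1 => rfl

lemma prodRewAt_liftTraj (lab : A → S → Z) (δu : U → Z → U) (δr : U → Z → ℝ)
    (u0 : U) (ω : ℕ → A × S) :
    prodRewAt lab δr u0 (liftTraj lab δu u0 ω) = rewAt lab δu δr u0 ω := by
  funext i
  simp [prodRewAt, rewAt, prodNodeAt_liftTraj, liftTraj]

/-- End state of a history starting in `s`. -/
def endSt (s : St) (h : List (Ac × St)) : St :=
  h.foldl (fun _ p => p.2) s

lemma endSt_append_singleton (s : St) (h : List (Ac × St)) (a : Ac) (s' : St) :
    endSt s (h ++ [(a, s')]) = s' := by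
  simp [endSt, List.foldl_append]

lemma nodeFold_append_singleton (lab : A → S → Z) (δu : U → Z → U) (u : U)
    (h : List (A × S)) (a : A) (s' : S) :
    nodeFold lab δu u (h ++ [(a, s')]) = δu (nodeFold lab δu u h) (lab a s') := by
  simp [nodeFold, List.foldl_append]

lemma liftHist_append_singleton (lab : A → S → Z) (δu : U → Z → U) :
    ∀ (h : List (A × S)) (u : U) (a : A) (s' : S),
      liftHist lab δu u (h ++ [(a, s')])
        = liftHist lab δu u h ++ [(a, (s', δu (nodeFold lab δu u h) (lab a s')))]
  | [], u, a, s' => by simp [liftHist, nodeFold]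
  | (b, t') :: rest, u, a, s' => by
      show (b, (t', δu u (lab b t'))) :: liftHist lab δu (δu u (lab b t')) (rest ++ [(a, s')]) = _
      rw [liftHist_append_singleton lab δu rest (δu u (lab b t')) a s']
      rfl

lemma validFrom_append_singleton (T : St → Ac → St → ℝ) :
    ∀ (h : List (Ac × St)) (s : St) (a : Ac) (s' : St),
      ValidFrom T s h → 0 < T (endSt s h) a s' → ValidFrom T s (h ++ [(a, s')])
  | [], s, a, s', _, hpos => ⟨hpos, trivial⟩
  | (b, t') :: rest, s, a, s', ⟨h1, h2⟩, hpos => by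
      refine ⟨h1, validFrom_append_singleton T rest t' a s' h2 ?_⟩
      exact hpos

lemma prefixProbAux_ne_lift [Fintype S] [Fintype A]
    (T : S → A → S → ℝ) (lab : A → S → Z) (δu : U → Z → U)
    (πP : List (A × (S × U)) → A) :
    ∀ (hP : List (A × (S × U))) (s : S) (u : U) (past : List (A × (S × U))),
      hP ≠ liftHist lab δu u (strip hP) →
      prefixProbAux (prodT T lab δu) πP (s, u) past hP = 0
  | [], s, u, past, hne => absurd rfl hne
  | (a, q) :: rest, s, u, past, hne => by
      by_cases hq : q.2 = δu u (lab a q.1)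
      · have hrec : rest ≠ liftHist lab δu (δu u (lab a q.1)) (strip rest) := by
          intro hcon
          apply hne
          show (a, q) :: rest = liftHist lab δu u ((a, q.1) :: strip rest)
          show (a, q) :: rest
            = (a, (q.1, δu u (lab a q.1))) :: liftHist lab δu (δu u (lab a q.1)) (strip rest)
          rw [← hcon]
          exact congrArg (· :: rest) (Prod.ext rfl (Prod.ext rfl hq))
        have := prefixProbAux_ne_lift T lab δu πP rest q.1 q.2 (past ++ [(a, q)]) (by
          rw [hq]; exact hrec)
        show (if a = πP past then prodT T lab δu (s, u) a q else 0) *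
          prefixProbAux (prodT T lab δu) πP q (past ++ [(a, q)]) rest = 0
        rw [show prefixProbAux (prodT T lab δu) πP q (past ++ [(a, q)]) rest = 0 from by
          cases q; exact this]
        ring
      · show (if a = πP past then prodT T lab δu (s, u) a q else 0) *
          prefixProbAux (prodT T lab δu) πP q (past ++ [(a, q)]) rest = 0
        have : prodT T lab δu (s, u) a q = 0 := by simp [prodT, hq]
        rw [this]
        simp

lemma prefixProbAux_lift [Fintype S] [Fintype A]
    (M : NRMDP S A) (lab : A → S → Z) (δu : U → Z → U) (u0 : U)
    (π : List (A × S) → A) (πP : List (A × (S × U)) → A)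
    (hcorr : ∀ h : List (A × S), ValidFrom M.T M.s0 h →
      πP (liftHist lab δu u0 h) = π h) :
    ∀ (h past : List (A × S)),
      ValidFrom M.T M.s0 past →
      prefixProbAux (prodT M.T lab δu) πP (endSt M.s0 past, nodeFold lab δu u0 past)
          (liftHist lab δu u0 past) (liftHist lab δu (nodeFold lab δu u0 past) h)
        = prefixProbAux M.T π (endSt M.s0 past) past h
  | [], _, _ => rfl
  | (a, s') :: t, past, hvalid => by
      show (if a = πP (liftHist lab δu u0 past) then
            prodT M.T lab δu (endSt M.s0 past, nodeFold lab δu u0 past) a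
              (s', δu (nodeFold lab δu u0 past) (lab a s')) else 0) *
          prefixProbAux (prodT M.T lab δu) πP (s', δu (nodeFold lab δu u0 past) (lab a s'))
            (liftHist lab δu u0 past ++ [(a, (s', δu (nodeFold lab δu u0 past) (lab a s')))])
            (liftHist lab δu (δu (nodeFold lab δu u0 past) (lab a s')) t)
        = (if a = π past then M.T (endSt M.s0 past) a s' else 0) *
            prefixProbAux M.T π s' (past ++ [(a, s')]) t
      rw [hcorr past hvalid]
      have hpT : prodT M.T lab δu (endSt M.s0 past, nodeFold lab δu u0 past) a
          (s', δu (nodeFold lab δu u0 past) (lab a s'))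
          = M.T (endSt M.s0 past) a s' := by simp [prodT]
      rw [hpT]
      by_cases ha : a = π past
      · by_cases hT : 0 < M.T (endSt M.s0 past) a s'
        · have hvalid' : ValidFrom M.T M.s0 (past ++ [(a, s')]) :=
            validFrom_append_singleton M.T past M.s0 a s' hvalid hT
          have IH := prefixProbAux_lift M lab δu u0 π πP hcorr t (past ++ [(a, s')]) hvalid'
          rw [endSt_append_singleton, nodeFold_append_singleton,
            liftHist_append_singleton] at IH
          rw [IH]
        · have hT0 : M.T (endSt M.s0 past) a s' = 0 :=
            le_antisymm (not_lt.1 hT) (M.T_nonneg _ a s')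
          rw [hT0]; simp
      · simp [ha]

lemma prefixProb_lift [Fintype S] [Fintype A]
    (M : NRMDP S A) (lab : A → S → Z) (δu : U → Z → U) (u0 : U)
    (π : List (A × S) → A) (πP : List (A × (S × U)) → A)
    (hcorr : ∀ h : List (A × S), ValidFrom M.T M.s0 h →
      πP (liftHist lab δu u0 h) = π h) (h : List (A × S)) :
    prefixProb (prodT M.T lab δu) πP (M.s0, u0) (liftHist lab δu u0 h)
      = prefixProb M.T π M.s0 h :=
  prefixProbAux_lift M lab δu u0 π πP hcorr h [] trivial

lemma measurable_nodeAt [Countable A] [Countable S] [Countable U]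
    (lab : A → S → Z) (δu : U → Z → U) (u0 : U) :
    ∀ i : ℕ, @Measurable (ℕ → A × S) U _ ⊤ (fun ω => nodeAt lab δu u0 ω i)
  | 0 => measurable_const
  | i + 1 =>
      measurable_comp2_top (measurable_nodeAt lab δu u0 i) (eval_measurable_top i)
        (fun u p => δu u (lab p.1 p.2))

lemma measurable_liftTraj [Countable A] [Countable S] [Countable U]
    (lab : A → S → Z) (δu : U → Z → U) (u0 : U) :
    Measurable (liftTraj lab δu u0) := by
  refine @measurable_pi_lambda (ℕ → A × S) ℕ (fun _ => A × (S × U)) _ (fun _ => ⊤)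
    (liftTraj lab δu u0) (fun i => ?_)
  exact measurable_comp2_top (eval_measurable_top i) (measurable_nodeAt lab δu u0 (i + 1))
    (fun p u => (p.1, (p.2, u)))

lemma measurable_meanPayoff_prodRew [Countable A] [Countable S] [Countable U]
    (lab : A → S → Z) (δr : U → Z → ℝ) (u0 : U) :
    Measurable (fun ω : ℕ → A × (S × U) => meanPayoff (prodRewAt lab δr u0 ω)) := by
  have hrew : ∀ i, Measurable (fun ω : ℕ → A × (S × U) => prodRewAt lab δr u0 ω i) := by
    intro i
    apply measurable_of_top_cod
    have hnode : @Measurable (ℕ → A × (S × U)) U _ ⊤ (fun ω => prodNodeAt u0 ω i) := by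
      cases i with
      | zero => exact measurable_const
      | succ j =>
          exact measurable_comp2_top (eval_measurable_top (X := A × (S × U)) j)
            (eval_measurable_top (X := A × (S × U)) j) (fun p _ => p.2.2)
    exact measurable_comp2_top hnode (eval_measurable_top i)
      (fun u p => δr u (lab p.1 p.2.1))
  unfold meanPayoff
  apply Measurable.limsup
  intro k
  exact (Finset.measurable_sum (Finset.range k) (fun i _ => hrew i)).div_const _

end AuxProof

/-- For every strategy `π` for `M` and the corresponding
strategy `π⊗` for `P = M ⊗_λ R` (acting on `B`-images of histories of `M`
as prescribed by `π⊗(B(σh)) = π(σh)`), the expected mean payoff of the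
non-Markovian reward trace of `R` in `M` equals the expected mean payoff of
the immediate rewards `R⊗` in `P`. -/
theorem expected_meanPayoff_eq_product
    [Fintype S] [Fintype A] [Fintype U] [Fintype Z]
    (M : NRMDP S A) (null : Z) (lab : A → S → Z) (R : MRM U Z null)
    (π : List (A × S) → A) (πP : List (A × (S × U)) → A)
    (hcorr : ∀ h : List (A × S), ValidFrom M.T M.s0 h →
      πP (liftHist lab R.δu R.u0 h) = π h)
    (μM : MeasureTheory.Measure (ℕ → A × S))
    (μP : MeasureTheory.Measure (ℕ → A × (S × U)))
    (hμM : IsInduced M.T π M.s0 μM)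
    (hμP : IsInduced (prodT M.T lab R.δu) πP ((M.s0 : S), (R.u0 : U)) μP) :
    ∫ ω, meanPayoff (rewAt lab R.δu R.δr R.u0 ω) ∂μM =
      ∫ ω, meanPayoff (prodRewAt lab R.δr R.u0 ω) ∂μP := by
  have hPhi : Measurable (liftTraj lab R.δu R.u0) := measurable_liftTraj lab R.δu R.u0
  haveI h1 : IsProbabilityMeasure μM := hμM.1
  haveI h2 : IsProbabilityMeasure μP := hμP.1
  haveI h3 : IsProbabilityMeasure (μM.map (liftTraj lab R.δu R.u0)) :=
    Measure.isProbabilityMeasure_map hPhi.aemeasurable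
  have hmap : μP = μM.map (liftTraj lab R.δu R.u0) := by
    refine MeasureTheory.ext_of_generate_finite _ generateFrom_Cyl isPiSystem_Cyl ?_
      (by rw [measure_univ, measure_univ])
    rintro _ ⟨hp, rfl⟩
    rw [hμP.2 hp, Measure.map_apply hPhi (measurableSet_Cyl hp)]
    by_cases hc : hp = liftHist lab R.δu R.u0 (strip hp)
    · rw [hc, liftTraj_preimage_Cyl_lift, hμM.2,
        prefixProb_lift M lab R.δu R.u0 π πP hcorr]
    · rw [liftTraj_preimage_Cyl_ne lab R.δu R.u0 hp hc]
      have h0 : prefixProb (prodT M.T lab R.δu) πP (M.s0, R.u0) hp = 0 :=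
        prefixProbAux_ne_lift M.T lab R.δu πP hp M.s0 R.u0 [] hc
      rw [h0]
      simp
  rw [hmap, integral_map hPhi.aemeasurable
    (measurable_meanPayoff_prodRew lab R.δr R.u0).aestronglyMeasurable]
  exact integral_congr_ae (Filter.Eventually.of_forall fun ω =>
    congrArg meanPayoff (prodRewAt_liftTraj lab R.δu R.δr R.u0 ω).symm)
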